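/- Let m, k ≥ 1 and ℓ ≥ 1. Let Z^{(1)},…,Z^{(ℓ)} be independent random real m × k matrices such that, for each r, every entry of Z^{(r)} is square integrable with E[(Z^{(r)}_{ij})^2] = 1 for all (i,j) and E[Z^{(r)}_{ij} Z^{(r)}_{rs}] = 0 whenever (i,j) ≠ (r,s). Let M be an ℓ-multilinear map from (ℝ^{m×k})^ℓ to ℝ. Then for every (i,j): E[ (Z^{(1)}_{ij} · Z^{(2)}_{ij} ⋯ Z^{(ℓ)}_{ij}) · M(Z^{(1)},…,Z^{(ℓ)}) ] = M(E_{ij},…,E_{ij}), where E_{ij} is the matrix with entry 1 in position (i,j) and 0 elsewhere. -/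

import Mathlib

open MeasureTheory

/-- Product of integrable coordinate functions is integrable on a product measure. -/
lemma aux_integrable_pi_prod {n : ℕ} {α : Type*} [MeasurableSpace α]
    (μ : Fin n → Measure α) [∀ i, SigmaFinite (μ i)] (f : Fin n → α → ℝ)
    (hf : ∀ i, Integrable (f i) (μ i)) :
    Integrable (fun x : Fin n → α => ∏ i, f i (x i)) (Measure.pi μ) := by
  exact Integrable.fin_nat_prod (μ := μ) hf

/-- Fubini for a product of coordinate functions on a product measure. -/
lemma aux_integral_pi_prod {n : ℕ} {α : Type*} [MeasurableSpace α]
    (μ : Fin n → Measure α) [∀ i, SigmaFinite (μ i)] (f : Fin n → α → ℝ) :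
    ∫ x : Fin n → α, ∏ i, f i (x i) ∂(Measure.pi μ) = ∏ i, ∫ x, f i x ∂(μ i) := by
  exact integral_fin_nat_prod_eq_prod (μ := μ) f

/-- If `Z⁽¹⁾,…,Z⁽ˡ⁾` are independent random matrices (joint law the product of the
marginal laws `μ r`) with square integrable, normalized and uncorrelated entries,
then for any `ℓ`-multilinear form `M` on matrices,
`E[(Z⁽¹⁾_{ij} ⋯ Z⁽ˡ⁾_{ij}) M(Z⁽¹⁾,…,Z⁽ˡ⁾)] = M(E_{ij},…,E_{ij})`. -/
theorem stmt7 (m k ℓ : ℕ) (hm : 1 ≤ m) (hk : 1 ≤ k) (hℓ : 1 ≤ ℓ)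
    (μ : Fin ℓ → Measure (Fin m → Fin k → ℝ))
    [∀ r, IsProbabilityMeasure (μ r)]
    (hL2 : ∀ r i j, MemLp (fun Z => Z i j) 2 (μ r))
    (hvar : ∀ r i j, ∫ Z, (Z i j) ^ 2 ∂(μ r) = 1)
    (hcov : ∀ r (i : Fin m) (j : Fin k) (i' : Fin m) (j' : Fin k), (i, j) ≠ (i', j') →
      ∫ Z, Z i j * Z i' j' ∂(μ r) = 0)
    (M : MultilinearMap ℝ (fun _ : Fin ℓ => (Fin m → Fin k → ℝ)) ℝ)
    (i : Fin m) (j : Fin k) :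
    ∫ Z, (∏ r, Z r i j) * M Z ∂(Measure.pi μ)
      = M (fun _ => Pi.single i (Pi.single j 1)) := by
  classical
  set E : Fin m × Fin k → (Fin m → Fin k → ℝ) :=
    fun p => Pi.single p.1 (Pi.single p.2 1) with hE
  -- Every matrix decomposes in the canonical basis.
  have hdec : ∀ A : Fin m → Fin k → ℝ, A = ∑ p : Fin m × Fin k, A p.1 p.2 • E p := by
    intro A
    funext a b
    rw [Finset.sum_apply, Finset.sum_apply]
    rw [Finset.sum_eq_single (a, b)]
    · simp [hE, Pi.single_apply]
    · intro p _ hp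
      by_cases h1 : a = p.1 <;> by_cases h2 : b = p.2 <;>
        simp [hE, Pi.single_apply, h1, h2]
      exact absurd (Prod.ext h1.symm h2.symm) hp
    · simp
  -- Expand `M Z` multilinearly.
  have hMZ : ∀ Z : Fin ℓ → (Fin m → Fin k → ℝ),
      M Z = ∑ f : Fin ℓ → Fin m × Fin k,
        (∏ r, Z r (f r).1 (f r).2) * M (fun r => E (f r)) := by
    intro Z
    calc M Z = M (fun r => ∑ p : Fin m × Fin k, Z r p.1 p.2 • E p) := by
          congr 1; funext r; exact hdec (Z r)
      _ = ∑ f : Fin ℓ → Fin m × Fin k, M (fun r => Z r (f r).1 (f r).2 • E (f r)) :=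
          M.map_sum (fun r p => Z r p.1 p.2 • E p)
      _ = ∑ f : Fin ℓ → Fin m × Fin k,
            (∏ r, Z r (f r).1 (f r).2) * M (fun r => E (f r)) := by
          refine Finset.sum_congr rfl fun f _ => ?_
          rw [M.map_smul_univ]
          simp [smul_eq_mul]
  -- Integrability of products of two entries.
  have hint : ∀ (r : Fin ℓ) (p : Fin m × Fin k),
      Integrable (fun A : Fin m → Fin k → ℝ => A i j * A p.1 p.2) (μ r) := by
    intro r p
    have := ((hL2 r p.1 p.2).smul (hL2 r i j) (r := 1))
    exact memLp_one_iff_integrable.mp this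
  -- Value of each factor integral.
  have hfac : ∀ (r : Fin ℓ) (p : Fin m × Fin k),
      ∫ A, A i j * A p.1 p.2 ∂(μ r) = if p = (i, j) then 1 else 0 := by
    intro r p
    by_cases hp : p = (i, j)
    · subst hp
      simp only [if_pos rfl]
      rw [show (fun A : Fin m → Fin k → ℝ => A i j * A i j)
          = fun A => (A i j) ^ 2 by funext A; ring]
      exact hvar r i j
    · rw [if_neg hp]
      have : ((i : Fin m), (j : Fin k)) ≠ (p.1, p.2) := by
        intro h; exact hp (by simpa using h.symm)
      exact hcov r i j p.1 p.2 this
  -- Rewrite the integrand as a finite sum.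
  have hintegrand : ∀ Z : Fin ℓ → (Fin m → Fin k → ℝ),
      (∏ r, Z r i j) * M Z
        = ∑ f : Fin ℓ → Fin m × Fin k,
            (∏ r, Z r i j * Z r (f r).1 (f r).2) * M (fun r => E (f r)) := by
    intro Z
    rw [hMZ Z, Finset.mul_sum]
    refine Finset.sum_congr rfl fun f _ => ?_
    rw [← mul_assoc, ← Finset.prod_mul_distrib]
  calc ∫ Z, (∏ r, Z r i j) * M Z ∂(Measure.pi μ)
      = ∫ Z, ∑ f : Fin ℓ → Fin m × Fin k,
          (∏ r, Z r i j * Z r (f r).1 (f r).2) * M (fun r => E (f r))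
          ∂(Measure.pi μ) := by
        congr 1; funext Z; exact hintegrand Z
    _ = ∑ f : Fin ℓ → Fin m × Fin k,
          ∫ Z, (∏ r, Z r i j * Z r (f r).1 (f r).2) * M (fun r => E (f r))
          ∂(Measure.pi μ) := by
        refine integral_finset_sum _ fun f _ => ?_
        exact (aux_integrable_pi_prod μ
          (fun r A => A i j * A (f r).1 (f r).2)
          (fun r => hint r (f r))).mul_const _
    _ = ∑ f : Fin ℓ → Fin m × Fin k,
          (∏ r, ∫ A, A i j * A (f r).1 (f r).2 ∂(μ r)) * M (fun r => E (f r)) := by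
        refine Finset.sum_congr rfl fun f _ => ?_
        rw [integral_mul_const,
          aux_integral_pi_prod μ (fun r A => A i j * A (f r).1 (f r).2)]
    _ = ∑ f : Fin ℓ → Fin m × Fin k,
          (∏ r, if f r = (i, j) then (1 : ℝ) else 0) * M (fun r => E (f r)) := by
        refine Finset.sum_congr rfl fun f _ => ?_
        congr 1
        exact Finset.prod_congr rfl fun r _ => hfac r (f r)
    _ = M (fun _ => Pi.single i (Pi.single j 1)) := by
        rw [Finset.sum_eq_single (fun _ => ((i : Fin m), (j : Fin k)))]
        · simp [hE]
        · intro f _ hf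
          have : ∃ r, f r ≠ (i, j) := by
            by_contra h
            push_neg at h
            exact hf (funext h)
          obtain ⟨r, hr⟩ := this
          rw [Finset.prod_eq_zero (Finset.mem_univ r) (by simp [hr]), zero_mul]
        · simp
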